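/- Let G be a finite directed acyclic graph in which every node has out-degree at most 1. Then for every valid BSP schedule of G with parameters P, S, g, L there exists a valid non-replicating BSP schedule of G with the same parameters P, S, g, L whose cost is at most the cost of the given schedule; in particular, for such DAGs the minimum cost over all valid BSP schedules equals the minimum cost over all valid non-replicating BSP schedules. -/

import Mathlib

open Finset

/-- A BSP schedule on node set `V` with `P` processors and `S` supersteps: computation sets
`V_{p,s} ⊆ V` and communication sets `Γ_{p,s} ⊆ V × {1,…,P}`. -/
structure BSPSchedule (V : Type*) (P S : ℕ) where
  comp : Fin P → Fin S → Finset V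
  comm : Fin P → Fin S → Finset (V × Fin P)

namespace BSPSchedule

variable {V : Type*} {P S : ℕ}

/-- A node `v` is present on processor `p` in superstep `s` if `v ∈ V_{p,s'}` for some
`s' ≤ s`, or `(v, p) ∈ Γ_{p',s'}` for some `s' < s` and some `p' ≠ p`. -/
def present (sch : BSPSchedule V P S) (v : V) (p : Fin P) (s : Fin S) : Prop :=
  (∃ s' ≤ s, v ∈ sch.comp p s') ∨
  (∃ s' < s, ∃ p', p' ≠ p ∧ (v, p) ∈ sch.comm p' s')

/-- Validity of a BSP schedule for the DAG with edge relation `E`: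
(i) for every `v ∈ V_{p,s}`, every in-neighbor of `v` is present on `p` in superstep `s`;
(ii) for every `(v, p') ∈ Γ_{p,s}`, `v` is present on `p` in superstep `s`;
(iii) every node lies in some computation set. -/
def Valid (E : V → V → Prop) (sch : BSPSchedule V P S) : Prop :=
  (∀ p s, ∀ v ∈ sch.comp p s, ∀ u, E u v → sch.present u p s) ∧
  (∀ p s, ∀ x ∈ sch.comm p s, sch.present x.1 p s) ∧
  (∀ v : V, ∃ p s, v ∈ sch.comp p s)

/-- The set `Γ'_{p,s} = {(v, p') : (v, p) ∈ Γ_{p',s}}` of values received by `p` in `s`. -/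
def received [Fintype V] [DecidableEq V] (sch : BSPSchedule V P S)
    (p : Fin P) (s : Fin S) : Finset (V × Fin P) :=
  Finset.univ.filter (fun x => (x.1, p) ∈ sch.comm x.2 s)

/-- The BSP cost
`Σ_s ( max_p |V_{p,s}| + L + g · max_p max(|Γ_{p,s}|, |Γ'_{p,s}|) )`. -/
def cost [Fintype V] [DecidableEq V] (sch : BSPSchedule V P S) (g L : ℝ) : ℝ :=
  ∑ s : Fin S,
    (((Finset.univ.sup fun p => (sch.comp p s).card : ℕ) : ℝ) + L +
      g * ((Finset.univ.sup fun p =>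
        max (sch.comm p s).card (sch.received p s).card : ℕ) : ℝ))

/-- A schedule is non-replicating if the computation sets are pairwise disjoint. -/
def NonReplicating (sch : BSPSchedule V P S) : Prop :=
  ∀ p s p' s', (p, s) ≠ (p', s') → Disjoint (sch.comp p s) (sch.comp p' s')

end BSPSchedule

namespace Stmt11Aux
variable {V : Type*} {P S : ℕ}

open Classical in
/-- Trace the derivation of presence of `u` at `(p, s)` back to a computation occurrence. -/
noncomputable def pickAux (sch : BSPSchedule V P S)
    (hcm : ∀ p s, ∀ x ∈ sch.comm p s, sch.present x.1 p s) (u : V) :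
    (s : Fin S) → (p : Fin P) → sch.present u p s → Fin P × Fin S := fun s p h =>
  if hc : ∃ s' ≤ s, u ∈ sch.comp p s' then (p, hc.choose)
  else
    have h' : ∃ s' < s, ∃ p', p' ≠ p ∧ (u, p) ∈ sch.comm p' s' := h.resolve_left hc
    pickAux sch hcm u h'.choose h'.choose_spec.2.choose
      (hcm _ _ (u, p) h'.choose_spec.2.choose_spec.2)
termination_by s => s.val
decreasing_by exact h'.choose_spec.1

theorem pickAux_mem (sch : BSPSchedule V P S)
    (hcm : ∀ p s, ∀ x ∈ sch.comm p s, sch.present x.1 p s) (u : V) :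
    ∀ (n : ℕ) (s : Fin S), s.val < n → ∀ (p : Fin P) (h : sch.present u p s),
      u ∈ sch.comp (pickAux sch hcm u s p h).1 (pickAux sch hcm u s p h).2 := by
  intro n
  induction n with
  | zero => intro s hs; omega
  | succ n ih =>
    intro s hs p h
    rw [pickAux]
    split
    · next hc => exact hc.choose_spec.2
    · next hc =>
      have h' : ∃ s' < s, ∃ p', p' ≠ p ∧ (u, p) ∈ sch.comm p' s' := h.resolve_left hc
      exact ih h'.choose (by have := h'.choose_spec.1; omega) _ _

theorem pickAux_mem' (sch : BSPSchedule V P S)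
    (hcm : ∀ p s, ∀ x ∈ sch.comm p s, sch.present x.1 p s) (u : V)
    (s : Fin S) (p : Fin P) (h : sch.present u p s) :
    u ∈ sch.comp (pickAux sch hcm u s p h).1 (pickAux sch hcm u s p h).2 :=
  pickAux_mem sch hcm u (s.val + 1) s (Nat.lt_succ_self _) p h

/-- `u`'s value reaches processor `p` by superstep `s`, in the pruned schedule that keeps `u`
computed only at `pk u`, using only original communications. -/
inductive Avail (sch : BSPSchedule V P S) (pk : V → Fin P × Fin S) (u : V) :
    Fin P → Fin S → Prop
  | base (p : Fin P) (s : Fin S) : (pk u).1 = p → (pk u).2 ≤ s → Avail sch pk u p s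
  | step (p : Fin P) (s s' : Fin S) (p' : Fin P) : s' < s → p' ≠ p →
      (u, p) ∈ sch.comm p' s' → Avail sch pk u p' s' → Avail sch pk u p s

theorem pickAux_avail (sch : BSPSchedule V P S)
    (hcm : ∀ p s, ∀ x ∈ sch.comm p s, sch.present x.1 p s) (u : V)
    (pk : V → Fin P × Fin S) :
    ∀ (n : ℕ) (s : Fin S), s.val < n → ∀ (p : Fin P) (h : sch.present u p s),
      pk u = pickAux sch hcm u s p h → Avail sch pk u p s := by
  intro n
  induction n with
  | zero => intro s hs; omega
  | succ n ih =>
    intro s hs p h hpk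
    rw [pickAux] at hpk
    split at hpk
    · next hc =>
      exact Avail.base p s (by rw [hpk]) (by rw [hpk]; exact hc.choose_spec.1)
    · next hc =>
      have h' : ∃ s' < s, ∃ p', p' ≠ p ∧ (u, p) ∈ sch.comm p' s' := h.resolve_left hc
      exact Avail.step p s h'.choose h'.choose_spec.2.choose h'.choose_spec.1
        h'.choose_spec.2.choose_spec.1 h'.choose_spec.2.choose_spec.2
        (ih h'.choose (by have := h'.choose_spec.1; omega) _ _ hpk)

open Classical in
/-- Choose, for each node, a single computation occurrence, consistent with the occurrence
chosen for its (unique) out-neighbor. -/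
noncomputable def pickFn (E : V → V → Prop) (wf : WellFounded (fun a b : V => E b a))
    (sch : BSPSchedule V P S)
    (hcm : ∀ p s, ∀ x ∈ sch.comm p s, sch.present x.1 p s)
    (hcp : ∀ p s, ∀ v ∈ sch.comp p s, ∀ u, E u v → sch.present u p s)
    (hall : ∀ v : V, ∃ p s, v ∈ sch.comp p s) :
    ∀ u : V, {t : Fin P × Fin S // u ∈ sch.comp t.1 t.2} :=
  wf.fix (fun u ih =>
    if hv : ∃ v, E u v then
      let r := ih hv.choose hv.choose_spec
      ⟨pickAux sch hcm u r.1.2 r.1.1 (hcp r.1.1 r.1.2 hv.choose r.2 u hv.choose_spec),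
        pickAux_mem' sch hcm u _ _ _⟩
    else
      have h0 := hall u
      have hp : sch.present u h0.choose h0.choose_spec.choose :=
        Or.inl ⟨h0.choose_spec.choose, le_refl _, h0.choose_spec.choose_spec⟩
      ⟨pickAux sch hcm u h0.choose_spec.choose h0.choose hp,
        pickAux_mem' sch hcm u _ _ _⟩)

open Classical in
theorem pickFn_spec (E : V → V → Prop) (wf : WellFounded (fun a b : V => E b a))
    (sch : BSPSchedule V P S)
    (hcm : ∀ p s, ∀ x ∈ sch.comm p s, sch.present x.1 p s)
    (hcp : ∀ p s, ∀ v ∈ sch.comp p s, ∀ u, E u v → sch.present u p s)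
    (hall : ∀ v : V, ∃ p s, v ∈ sch.comp p s)
    (hout : ∀ u v w : V, E u v → E u w → v = w)
    (u v : V) (hE : E u v) :
    ∃ h : sch.present u (pickFn E wf sch hcm hcp hall v).1.1
        (pickFn E wf sch hcm hcp hall v).1.2,
      (pickFn E wf sch hcm hcp hall u).1 =
        pickAux sch hcm u (pickFn E wf sch hcm hcp hall v).1.2
          (pickFn E wf sch hcm hcp hall v).1.1 h := by
  have hv : ∃ w, E u w := ⟨v, hE⟩
  have hcv : v = hv.choose := hout u v hv.choose hE hv.choose_spec
  subst hcv
  have heq := wf.fix_eq (fun u ih =>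
    if hv : ∃ v, E u v then
      let r := ih hv.choose hv.choose_spec
      (⟨pickAux sch hcm u r.1.2 r.1.1 (hcp r.1.1 r.1.2 hv.choose r.2 u hv.choose_spec),
        pickAux_mem' sch hcm u _ _ _⟩ : {t : Fin P × Fin S // u ∈ sch.comp t.1 t.2})
    else
      have h0 := hall u
      have hp : sch.present u h0.choose h0.choose_spec.choose :=
        Or.inl ⟨h0.choose_spec.choose, le_refl _, h0.choose_spec.choose_spec⟩
      ⟨pickAux sch hcm u h0.choose_spec.choose h0.choose hp,
        pickAux_mem' sch hcm u _ _ _⟩) u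
  rw [show pickFn E wf sch hcm hcp hall = wf.fix _ from rfl]
  rw [heq, dif_pos hv]
  exact ⟨_, rfl⟩

end Stmt11Aux

theorem stmt11 {V : Type*} [Fintype V] [DecidableEq V]
    (E : V → V → Prop) (hacyc : ∀ v : V, ¬ Relation.TransGen E v v)
    (hout : ∀ u v w : V, E u v → E u w → v = w)
    (P S : ℕ) (hP : 1 ≤ P) (hS : 1 ≤ S)
    (g L : ℝ) (hg : 0 ≤ g) (hL : 0 ≤ L) :
    (∀ sch : BSPSchedule V P S, sch.Valid E →
      ∃ sch' : BSPSchedule V P S, sch'.Valid E ∧ sch'.NonReplicating ∧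
        sch'.cost g L ≤ sch.cost g L) ∧
    sInf {x : ℝ | ∃ sch : BSPSchedule V P S, sch.Valid E ∧ sch.cost g L = x} =
      sInf {x : ℝ | ∃ sch : BSPSchedule V P S,
        sch.Valid E ∧ sch.NonReplicating ∧ sch.cost g L = x} := by
  classical
  have part1 : ∀ sch : BSPSchedule V P S, sch.Valid E →
      ∃ sch' : BSPSchedule V P S, sch'.Valid E ∧ sch'.NonReplicating ∧
        sch'.cost g L ≤ sch.cost g L := by
    intro sch hvalid
    obtain ⟨h1, h2, h3⟩ := hvalid
    have wf : WellFounded (fun a b : V => E b a) := by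
      have wfT : WellFounded (Relation.TransGen (fun a b : V => E b a)) := by
        haveI : IsTrans V (Relation.TransGen (fun a b : V => E b a)) :=
          ⟨fun a b c => Relation.TransGen.trans⟩
        haveI : IsIrrefl V (Relation.TransGen (fun a b : V => E b a)) := by
          constructor
          intro a ha
          exact hacyc a (Relation.transGen_swap.mpr ha)
        exact Finite.wellFounded_of_trans_of_irrefl _
      exact Subrelation.wf (q := fun a b : V => E b a)
        (r := Relation.TransGen (fun a b : V => E b a)) (fun h => Relation.TransGen.single h) wfT
    set pk : V → Fin P × Fin S := fun u => (Stmt11Aux.pickFn E wf sch h2 h1 h3 u).1 with hpkdef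
    have hpkmem : ∀ u, u ∈ sch.comp (pk u).1 (pk u).2 :=
      fun u => (Stmt11Aux.pickFn E wf sch h2 h1 h3 u).2
    set sch' : BSPSchedule V P S :=
      ⟨fun p s => (sch.comp p s).filter fun v => pk v = (p, s),
       fun p s => (sch.comm p s).filter fun x => Stmt11Aux.Avail sch pk x.1 p s⟩ with hsch'
    have hcompmem : ∀ u, u ∈ sch'.comp (pk u).1 (pk u).2 := by
      intro u
      simp only [hsch', Finset.mem_filter]
      exact ⟨hpkmem u, trivial⟩
    have hAP : ∀ u p s, Stmt11Aux.Avail sch pk u p s → sch'.present u p s := by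
      intro u p s h
      induction h with
      | base p s hb1 hb2 =>
        left
        exact ⟨(pk u).2, hb2, by rw [← hb1]; exact hcompmem u⟩
      | step p s s' p' hss hp'p hmem hav ih =>
        right
        exact ⟨s', hss, p', hp'p, Finset.mem_filter.2 ⟨hmem, hav⟩⟩
    refine ⟨sch', ⟨?_, ?_, ?_⟩, ?_, ?_⟩
    · -- validity (i)
      intro p s v hv u hE
      rw [hsch'] at hv
      simp only [Finset.mem_filter] at hv
      obtain ⟨hvmem, hvpk⟩ := hv
      obtain ⟨hpre, heq⟩ := Stmt11Aux.pickFn_spec E wf sch h2 h1 h3 hout u v hE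
      have hav : Stmt11Aux.Avail sch pk u (pk v).1 (pk v).2 :=
        Stmt11Aux.pickAux_avail sch h2 u pk ((pk v).2.val + 1) (pk v).2
          (Nat.lt_succ_self _) (pk v).1 hpre heq
      rw [hvpk] at hav
      exact hAP u p s hav
    · -- validity (ii)
      intro p s x hx
      rw [hsch'] at hx
      simp only [Finset.mem_filter] at hx
      exact hAP x.1 p s hx.2
    · -- validity (iii)
      intro v
      exact ⟨(pk v).1, (pk v).2, hcompmem v⟩
    · -- non-replicating
      intro p s p' s' hne
      rw [Finset.disjoint_left]
      intro a ha ha'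
      simp only [hsch', Finset.mem_filter] at ha ha'
      exact hne (by rw [← ha.2, ← ha'.2])
    · -- cost
      unfold BSPSchedule.cost
      apply Finset.sum_le_sum
      intro s _
      have hc1 : (Finset.univ.sup fun p => (sch'.comp p s).card) ≤
          (Finset.univ.sup fun p => (sch.comp p s).card) := by
        apply Finset.sup_mono_fun
        intro p _
        exact Finset.card_le_card (Finset.filter_subset _ _)
      have hc2 : (Finset.univ.sup fun p => max (sch'.comm p s).card (sch'.received p s).card) ≤
          (Finset.univ.sup fun p => max (sch.comm p s).card (sch.received p s).card) := by
        apply Finset.sup_mono_fun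
        intro p _
        apply max_le_max
        · exact Finset.card_le_card (Finset.filter_subset _ _)
        · apply Finset.card_le_card
          intro x hx
          simp only [BSPSchedule.received, Finset.mem_filter, Finset.mem_univ, true_and] at hx ⊢
          exact (Finset.mem_filter.1 hx).1
      exact add_le_add (add_le_add (Nat.cast_le.2 hc1) le_rfl)
        (mul_le_mul_of_nonneg_left (Nat.cast_le.2 hc2) hg)
  refine ⟨part1, ?_⟩
  have hnonneg : ∀ sch : BSPSchedule V P S, 0 ≤ sch.cost g L := by
    intro sch
    apply Finset.sum_nonneg
    intro s _
    exact add_nonneg (add_nonneg (Nat.cast_nonneg _) hL) (mul_nonneg hg (Nat.cast_nonneg _))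
  have hA_ne : ∃ sch : BSPSchedule V P S, sch.Valid E := by
    refine ⟨⟨fun _ _ => Finset.univ, fun _ _ => ∅⟩, ?_, ?_, ?_⟩
    · intro p s v hv u hE
      exact Or.inl ⟨s, le_refl s, Finset.mem_univ u⟩
    · intro p s x hx
      simp at hx
    · intro v
      exact ⟨⟨0, hP⟩, ⟨0, hS⟩, Finset.mem_univ v⟩
  obtain ⟨sch₀, hsch₀⟩ := hA_ne
  set A : Set ℝ := {x : ℝ | ∃ sch : BSPSchedule V P S, sch.Valid E ∧ sch.cost g L = x} with hA
  set B : Set ℝ := {x : ℝ | ∃ sch : BSPSchedule V P S,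
    sch.Valid E ∧ sch.NonReplicating ∧ sch.cost g L = x} with hB
  have hAne : A.Nonempty := ⟨sch₀.cost g L, sch₀, hsch₀, rfl⟩
  have hBne : B.Nonempty := by
    obtain ⟨sch', hv', hnr', _⟩ := part1 sch₀ hsch₀
    exact ⟨sch'.cost g L, sch', hv', hnr', rfl⟩
  have hbddA : BddBelow A := by
    refine ⟨0, ?_⟩
    rintro x ⟨sch, -, rfl⟩
    exact hnonneg sch
  have hbddB : BddBelow B := by
    refine ⟨0, ?_⟩
    rintro x ⟨sch, -, -, rfl⟩
    exact hnonneg sch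
  have hBA : B ⊆ A := by
    rintro x ⟨sch, hv, -, rfl⟩
    exact ⟨sch, hv, rfl⟩
  apply le_antisymm
  · exact csInf_le_csInf hbddA hBne hBA
  · apply le_csInf hAne
    rintro x ⟨sch, hv, rfl⟩
    obtain ⟨sch', hv', hnr', hle⟩ := part1 sch hv
    exact le_trans (csInf_le hbddB ⟨sch', hv', hnr', rfl⟩) hle
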